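/- Let (a,r) satisfy 0 < r < 2 and (r+2)/2 < a ≤ 2, and set b = (r² - 2ra)/4. With A_x = -（1-β)/(a+b-1) where β = (a+√(a²+4b))/2, define f(M)_x = 1 + b·A_x²/((a+1)A_x - 1) and L_x = 2/(2+2a-r). Then f(M)_x - L_x = 4a(1-r)(2a-r)/((2-r)(2a-r+2)(2a+r)); in particular f(M)_x > L_x whenever additionally 0 < r < 1. -/

import Mathlib

/-- With the substitution b = (r²-2ra)/4 under (C1_{a,r}),
f(M)_x - L_x = 4a(1-r)(2a-r)/((2-r)(2a-r+2)(2a+r));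
in particular f(M)_x > L_x whenever additionally 0 < r < 1. -/
theorem fMx_sub_Lx (a r : ℝ) (hr0 : 0 < r) (hr2 : r < 2)
    (ha1 : (r + 2) / 2 < a) (ha2 : a ≤ 2)
    (b β Ax fMx Lx : ℝ)
    (hb : b = (r ^ 2 - 2 * r * a) / 4)
    (hβ : β = (a + Real.sqrt (a ^ 2 + 4 * b)) / 2)
    (hAx : Ax = -(1 - β) / (a + b - 1))
    (hfMx : fMx = 1 + b * Ax ^ 2 / ((a + 1) * Ax - 1))
    (hLx : Lx = 2 / (2 + 2 * a - r)) :
    fMx - Lx = 4 * a * (1 - r) * (2 * a - r) /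
      ((2 - r) * (2 * a - r + 2) * (2 * a + r)) ∧
    (r < 1 → fMx > Lx) := by
  have h2r : (0:ℝ) < 2 - r := by linarith
  have har : a > r := by linarith
  have h2ar2 : 2 * a - r - 2 > 0 := by linarith
  have hsq : Real.sqrt (a ^ 2 + 4 * b) = a - r := by
    have : a ^ 2 + 4 * b = (a - r) ^ 2 := by rw [hb]; ring
    rw [this, Real.sqrt_sq (by linarith)]
  have hβ' : β = a - r / 2 := by rw [hβ, hsq]; ring
  have hab1 : a + b - 1 = (2 - r) * (2 * a - r - 2) / 4 := by rw [hb]; ring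
  have hab1ne : a + b - 1 ≠ 0 := by
    rw [hab1]; positivity
  have hAx' : Ax = 2 / (2 - r) := by
    rw [hAx, hβ', hab1]
    rw [div_eq_div_iff (by positivity) (by linarith)]
    ring
  have hden : (a + 1) * Ax - 1 = (2 * a + r) / (2 - r) := by
    rw [hAx']
    field_simp
    ring
  have h2ar : (0:ℝ) < 2 * a + r := by linarith
  have h2a2r : (0:ℝ) < 2 * a - r + 2 := by linarith
  have h22ar : (0:ℝ) < 2 + 2 * a - r := by linarith
  have key : fMx - Lx = 4 * a * (1 - r) * (2 * a - r) /
      ((2 - r) * (2 * a - r + 2) * (2 * a + r)) := by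
    rw [hfMx, hLx, hden, hAx', hb]
    field_simp [show (2:ℝ) * (1 + a) - r ≠ 0 by linarith]
    ring
  refine ⟨key, fun hr1 => ?_⟩
  have : fMx - Lx > 0 := by
    rw [key]
    have ha0 : 0 < a := by linarith
    have h1 : (0:ℝ) < 2 * a - r := by linarith
    have h2 : (0:ℝ) < 1 - r := by linarith
    positivity
  linarith
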